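/- Let I ⊆ Loc_>(K[X]) be an ideal, > a local order, and G = {g_1,...,g_s} ⊆ I a set of polynomials. If G generates I and NF(spoly(g_i,g_j) | G) = 0 for all i < j (where NF is a weak normal form), then G is a standard basis of I, i.e., lt(I) = ⟨lt(g_1),...,lt(g_s)⟩. -/

import Mathlib

open MvPolynomial

def IsSemigroupOrder {σ : Type*} (r : (σ →₀ ℕ) → (σ →₀ ℕ) → Prop) : Prop :=
  Transitive r ∧ (∀ a b, a ≠ b → r a b ∨ r b a) ∧ (∀ a b, r a b → ¬ r b a) ∧
    ∀ a b c, r a b → r (a + c) (b + c)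

def IsLocalOrder {σ : Type*} (r : (σ →₀ ℕ) → (σ →₀ ℕ) → Prop) : Prop :=
  IsSemigroupOrder r ∧ ∀ i : σ, r 0 (Finsupp.single i 1)

def IsLeadMon {σ : Type*} {K : Type*} [CommSemiring K]
    (r : (σ →₀ ℕ) → (σ →₀ ℕ) → Prop) (f : MvPolynomial σ K) (α : σ →₀ ℕ) : Prop :=
  α ∈ f.support ∧ ∀ β ∈ f.support, β ≠ α → r α β

/-- The multiplicative set `S_>` of polynomials with constant term `1`
(the units of `Loc_>(K[X])` up to scalars). -/
noncomputable def unitSet (n : ℕ) (K : Type*) [Field K] : Submonoid (MvPolynomial (Fin n) K) :=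
  Submonoid.comap
    (constantCoeff : MvPolynomial (Fin n) K →+* K).toMonoidHom (⊥ : Submonoid K)

section OrderLemmas

variable {n : ℕ} {r : (Fin n →₀ ℕ) → (Fin n →₀ ℕ) → Prop}

/-- `a` is `r`-above or equal to `b`. -/
def rle (r : (Fin n →₀ ℕ) → (Fin n →₀ ℕ) → Prop) (a b : Fin n →₀ ℕ) : Prop := a = b ∨ r a b

namespace LocalOrder

variable (hr : IsLocalOrder r)
include hr

theorem rtrans : ∀ {a b c}, r a b → r b c → r a c := fun hab hbc => hr.1.1 hab hbc

theorem rtot : ∀ a b, a ≠ b → r a b ∨ r b a := hr.1.2.1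

theorem rasym : ∀ {a b}, r a b → ¬ r b a := fun h => hr.1.2.2.1 _ _ h

theorem rirrefl : ∀ {a}, ¬ r a a := fun h => rasym hr h h

theorem radd : ∀ {a b} (c), r a b → r (a + c) (b + c) := fun c h => hr.1.2.2.2 _ _ c h

theorem radd_left : ∀ {a b} (c), r a b → r (c + a) (c + b) := by
  intro a b c h
  rw [add_comm c a, add_comm c b]; exact radd hr c h

omit hr in theorem rle_refl (a) : rle r a a := Or.inl rfl

theorem rle_trans : ∀ {a b c}, rle r a b → rle r b c → rle r a c := by
  rintro a b c (rfl | h) (rfl | h') <;> [exact Or.inl rfl; exact Or.inr h'; exact Or.inr h;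
    exact Or.inr (rtrans hr h h')]

theorem r_of_rle_of_r : ∀ {a b c}, rle r a b → r b c → r a c := by
  rintro a b c (rfl | h) h'; exact h'; exact rtrans hr h h'

theorem r_of_r_of_rle : ∀ {a b c}, r a b → rle r b c → r a c := by
  rintro a b c h (rfl | h'); exact h; exact rtrans hr h h'

theorem rle_antisymm : ∀ {a b}, rle r a b → rle r b a → a = b := by
  rintro a b (rfl | h) (h' | h') <;> try rfl
  · exact h'.symm
  · exact absurd h (rasym hr h')

theorem rle_add : ∀ {a b} (c), rle r a b → rle r (a + c) (b + c) := by
  rintro a b c (rfl | h); exact Or.inl rfl; exact Or.inr (radd hr c h)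

theorem rle_add_left : ∀ {a b} (c), rle r a b → rle r (c + a) (c + b) := by
  rintro a b c (rfl | h); exact Or.inl rfl; exact Or.inr (radd_left hr c h)

theorem r_zero_single (i : Fin n) : ∀ m : ℕ, m ≠ 0 → r 0 (Finsupp.single i m) := by
  intro m
  induction m with
  | zero => intro h; exact absurd rfl h
  | succ k ih =>
    intro _
    rcases Nat.eq_zero_or_pos k with hk | hk
    · subst hk; exact hr.2 i
    · have h1 : r 0 (Finsupp.single i 1) := hr.2 i
      have h2 : r (Finsupp.single i k) (Finsupp.single i k + Finsupp.single i 1) := by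
        have := radd_left hr (c := Finsupp.single i k) h1
        simpa using this
      have : r 0 (Finsupp.single i k + Finsupp.single i 1) :=
        rtrans hr (ih (Nat.pos_iff_ne_zero.mp hk)) h2
      rwa [← Finsupp.single_add] at this

theorem r_zero : ∀ β : Fin n →₀ ℕ, β ≠ 0 → r 0 β := by
  intro β
  induction β using Finsupp.induction with
  | zero => intro h; exact absurd rfl h
  | single_add i m f hif hm ih =>
    intro _
    rcases eq_or_ne f 0 with rfl | hf
    · simpa using r_zero_single hr i m hm
    · have h1 : r 0 f := ih hf
      have h2 : r f (Finsupp.single i m + f) := by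
        have := radd hr (c := f) (r_zero_single hr i m hm)
        simpa using this
      exact rtrans hr h1 h2

theorem r_add_right (a : Fin n →₀ ℕ) {β : Fin n →₀ ℕ} (hβ : β ≠ 0) : r a (a + β) := by
  have := radd hr (c := a) (r_zero hr β hβ)
  rw [zero_add, add_comm β a] at this
  exact this

/-- `r`-above-or-equal is implied by divisibility (being componentwise smaller). -/
theorem rle_of_le {a b : Fin n →₀ ℕ} (h : a ≤ b) : rle r a b := by
  obtain ⟨c, rfl⟩ := exists_add_of_le h
  rcases eq_or_ne c 0 with rfl | hc
  · simpa using rle_refl (r := r) a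
  · exact Or.inr (r_add_right hr a hc)

/-- Every nonempty set of monomials has an `r`-greatest element (reverse Dickson). -/
theorem exists_rmax (S : Set (Fin n →₀ ℕ)) (hS : S.Nonempty) :
    ∃ m ∈ S, ∀ x ∈ S, x ≠ m → r m x := by
  by_contra hcon
  push_neg at hcon
  have step : ∀ x : S, ∃ y : S, r (y : Fin n →₀ ℕ) x := by
    rintro ⟨x, hx⟩
    obtain ⟨y, hy, hxy, hnr⟩ := hcon x hx
    rcases rtot hr y x (by exact fun h => hxy (h ▸ rfl)) with h | h
    · exact ⟨⟨y, hy⟩, h⟩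
    · exact absurd h hnr
  choose g hg using step
  obtain ⟨x0, hx0⟩ := hS
  set f : ℕ → S := fun k => g^[k] ⟨x0, hx0⟩ with hf
  have hchain : ∀ k, r (f (k + 1) : Fin n →₀ ℕ) (f k) := by
    intro k
    have : f (k + 1) = g (f k) := by
      rw [hf]; simp [Function.iterate_succ_apply']
    rw [this]; exact hg (f k)
  have hchain' : ∀ j i, i < j → r (f j : Fin n →₀ ℕ) (f i) := by
    intro j
    induction j with
    | zero => omega
    | succ k ih =>
      intro i hij
      rcases Nat.lt_succ_iff_lt_or_eq.mp hij with h | h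
      · exact rtrans hr (hchain k) (ih i h)
      · subst h; exact hchain i
  obtain ⟨i, j, hij, hle⟩ := Set.isPWO_of_wellQuasiOrderedLE (Set.univ : Set (Fin n →₀ ℕ))
    (fun k => ⟨(f k : Fin n →₀ ℕ), Set.mem_univ _⟩)
  have hr_ji : r (f j : Fin n →₀ ℕ) (f i) := hchain' j i hij
  rcases rle_of_le hr (a := (f i : Fin n →₀ ℕ)) (b := (f j : Fin n →₀ ℕ)) hle with h | h
  · rw [h] at hr_ji; exact rirrefl hr hr_ji
  · exact rasym hr h hr_ji

end LocalOrder
end OrderLemmas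

section LMTheory

variable {n : ℕ} {K : Type*} [Field K] {r : (Fin n →₀ ℕ) → (Fin n →₀ ℕ) → Prop}

/-- `δ` is the lead monomial of the power series `p` w.r.t. `r`. -/
def IsLMps (r : (Fin n →₀ ℕ) → (Fin n →₀ ℕ) → Prop) (p : MvPowerSeries (Fin n) K)
    (δ : Fin n →₀ ℕ) : Prop :=
  MvPowerSeries.coeff δ p ≠ 0 ∧
    ∀ ε, MvPowerSeries.coeff ε p ≠ 0 → ε ≠ δ → r δ ε

namespace LocalOrder

variable (hr : IsLocalOrder r)
include hr

theorem exists_isLMps {p : MvPowerSeries (Fin n) K} (hp : p ≠ 0) : ∃ δ, IsLMps r p δ := by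
  have hS : {δ : Fin n →₀ ℕ | MvPowerSeries.coeff δ p ≠ 0}.Nonempty := by
    by_contra hc
    rw [Set.not_nonempty_iff_eq_empty, Set.eq_empty_iff_forall_notMem] at hc
    exact hp (MvPowerSeries.ext fun δ => by
      have := hc δ
      simp only [Set.mem_setOf_eq, not_not] at this
      simpa using this)
  obtain ⟨m, hm, hmax⟩ := exists_rmax hr _ hS
  exact ⟨m, hm, fun ε hε hne => hmax ε hε hne⟩

omit hr in
theorem isLMps_ne_zero {p : MvPowerSeries (Fin n) K} {δ} (h : IsLMps r p δ) : p ≠ 0 := by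
  intro hp; exact h.1 (by simp [hp])

theorem isLMps_unique {p : MvPowerSeries (Fin n) K} {δ ε} (h1 : IsLMps r p δ)
    (h2 : IsLMps r p ε) : δ = ε := by
  by_contra hne
  exact rasym hr (h1.2 ε h2.1 (Ne.symm hne)) (h2.2 δ h1.1 hne)

set_option maxHeartbeats 1000000 in
/-- lead coefficient of a product. -/
theorem coeff_mul_lm {p q : MvPowerSeries (Fin n) K} {δ ε} (hp : IsLMps r p δ)
    (hq : IsLMps r q ε) :
    MvPowerSeries.coeff (δ + ε) (p * q) =
      MvPowerSeries.coeff δ p * MvPowerSeries.coeff ε q := by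
  classical
  rw [MvPowerSeries.coeff_mul]
  apply Finset.sum_eq_single_of_mem (δ, ε) (Finset.HasAntidiagonal.mem_antidiagonal.mpr rfl)
  rintro ⟨x, y⟩ hmem hne
  rw [Finset.HasAntidiagonal.mem_antidiagonal] at hmem
  by_contra hval
  have hx : MvPowerSeries.coeff x p ≠ 0 := fun h => hval (by simp [h])
  have hy : MvPowerSeries.coeff y q ≠ 0 := fun h => hval (by simp [h])
  have hxδ : x ≠ δ := by
    rintro rfl
    have : y = ε := by
      have := hmem
      exact add_left_cancel this
    exact hne (by rw [this])
  have hyε : y ≠ ε := by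
    rintro rfl
    have : x = δ := add_right_cancel hmem
    exact hne (by rw [this])
  have h1 : r (δ + y) (x + y) := radd hr y (hp.2 x hx hxδ)
  have h2 : r (δ + ε) (δ + y) := radd_left hr δ (hq.2 y hy hyε)
  have := rtrans hr h2 h1
  rw [hmem] at this
  exact rirrefl hr this

set_option maxHeartbeats 1000000 in
theorem isLMps_mul {p q : MvPowerSeries (Fin n) K} {δ ε} (hp : IsLMps r p δ)
    (hq : IsLMps r q ε) : IsLMps r (p * q) (δ + ε) := by
  classical
  constructor
  · rw [coeff_mul_lm hr hp hq]
    exact mul_ne_zero hp.1 hq.1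
  · intro ζ hζ hne
    rw [MvPowerSeries.coeff_mul] at hζ
    obtain ⟨⟨x, y⟩, hmem, hval⟩ := Finset.exists_ne_zero_of_sum_ne_zero hζ
    rw [Finset.HasAntidiagonal.mem_antidiagonal] at hmem
    have hx : MvPowerSeries.coeff x p ≠ 0 := fun h => hval (by simp [h])
    have hy : MvPowerSeries.coeff y q ≠ 0 := fun h => hval (by simp [h])
    have hxle : rle r δ x := by
      rcases eq_or_ne x δ with h | h
      · exact Or.inl h.symm
      · exact Or.inr (hp.2 x hx h)
    have hyle : rle r ε y := by
      rcases eq_or_ne y ε with h | h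
      · exact Or.inl h.symm
      · exact Or.inr (hq.2 y hy h)
    have h1 : rle r (δ + ε) (x + ε) := rle_add hr ε hxle
    have h2 : rle r (x + ε) (x + y) := rle_add_left hr x hyle
    have := rle_trans hr h1 h2
    rw [hmem] at this
    rcases this with h | h
    · exact absurd h.symm hne
    · exact h

end LocalOrder
end LMTheory

/-- The S-polynomial of `f` and `g` with leading monomials `α`, `β`. -/
noncomputable def spoly {n : ℕ} {K : Type*} [Field K]
    (f g : MvPolynomial (Fin n) K) (α β : Fin n →₀ ℕ) : MvPolynomial (Fin n) K :=
  C (f.coeff α)⁻¹ * monomial (α ⊔ β - α) 1 * f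
    - C (g.coeff β)⁻¹ * monomial (α ⊔ β - β) 1 * g

section SpolyLemmas

variable {n s : ℕ} {K : Type*} [Field K] {r : (Fin n →₀ ℕ) → (Fin n →₀ ℕ) → Prop}

namespace LocalOrder

theorem isLMps_coe {f : MvPolynomial (Fin n) K} {β} (h : IsLeadMon r f β) :
    IsLMps r (f : MvPowerSeries (Fin n) K) β := by
  constructor
  · rw [MvPolynomial.coeff_coe]
    exact MvPolynomial.mem_support_iff.mp h.1
  · intro ε hε hne
    rw [MvPolynomial.coeff_coe] at hε
    exact h.2 ε (MvPolynomial.mem_support_iff.mpr hε) hne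

theorem spoly_coe_eq {f g : MvPolynomial (Fin n) K} {a b : Fin n →₀ ℕ} :
    ((spoly f g a b : MvPolynomial (Fin n) K) : MvPowerSeries (Fin n) K) =
      MvPowerSeries.monomial (a ⊔ b - a) (f.coeff a)⁻¹ * (f : MvPowerSeries (Fin n) K)
      - MvPowerSeries.monomial (a ⊔ b - b) (g.coeff b)⁻¹ * (g : MvPowerSeries (Fin n) K) := by
  rw [spoly, C_mul_monomial, mul_one, C_mul_monomial, mul_one]
  have hcoe : ∀ p : MvPolynomial (Fin n) K,
      (p : MvPowerSeries (Fin n) K) = MvPolynomial.coeToMvPowerSeries.ringHom p := fun _ => rfl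
  rw [hcoe, map_sub, map_mul, map_mul, ← hcoe, ← hcoe, ← hcoe, ← hcoe,
    MvPolynomial.coe_monomial, MvPolynomial.coe_monomial]

variable (hr : IsLocalOrder r)
include hr

theorem spoly_coeff_bound {f g : MvPolynomial (Fin n) K} {a b : Fin n →₀ ℕ}
    (hf : IsLeadMon r f a) (hg : IsLeadMon r g b) {ζ : Fin n →₀ ℕ}
    (hζ : MvPowerSeries.coeff ζ (spoly f g a b : MvPowerSeries (Fin n) K) ≠ 0) :
    r (a ⊔ b) ζ := by
  classical
  have hfa : f.coeff a ≠ 0 := MvPolynomial.mem_support_iff.mp hf.1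
  have hgb : g.coeff b ≠ 0 := MvPolynomial.mem_support_iff.mp hg.1
  -- first: coefficient of the spoly at `a ⊔ b` vanishes
  have hlcm : MvPowerSeries.coeff (a ⊔ b) (spoly f g a b : MvPowerSeries (Fin n) K) = 0 := by
    rw [spoly_coe_eq, map_sub, MvPowerSeries.coeff_monomial_mul,
      MvPowerSeries.coeff_monomial_mul, if_pos tsub_le_self, if_pos tsub_le_self,
      tsub_tsub_cancel_of_le (le_sup_left : a ≤ a ⊔ b),
      tsub_tsub_cancel_of_le (le_sup_right : b ≤ a ⊔ b), MvPolynomial.coeff_coe,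
      MvPolynomial.coeff_coe, inv_mul_cancel₀ hfa, inv_mul_cancel₀ hgb, sub_self]
  -- second: every monomial of the spoly is `rle`-below `a ⊔ b`
  have hbelow : rle r (a ⊔ b) ζ := by
    rw [spoly_coe_eq, map_sub] at hζ
    have : MvPowerSeries.coeff ζ (MvPowerSeries.monomial (a ⊔ b - a) (f.coeff a)⁻¹ *
        (f : MvPowerSeries (Fin n) K)) ≠ 0 ∨
        MvPowerSeries.coeff ζ (MvPowerSeries.monomial (a ⊔ b - b) (g.coeff b)⁻¹ *
        (g : MvPowerSeries (Fin n) K)) ≠ 0 := by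
      by_contra hcon
      push_neg at hcon
      rw [hcon.1, hcon.2, sub_zero] at hζ
      exact hζ rfl
    have key : ∀ (h : MvPolynomial (Fin n) K) (c : Fin n →₀ ℕ), IsLeadMon r h c →
        ∀ (x : K), MvPowerSeries.coeff ζ (MvPowerSeries.monomial (a ⊔ b - c) x *
          (h : MvPowerSeries (Fin n) K)) ≠ 0 → c ≤ a ⊔ b → rle r (a ⊔ b) ζ := by
      intro h c hc x hx hcab
      rw [MvPowerSeries.coeff_monomial_mul] at hx
      by_cases hle : a ⊔ b - c ≤ ζ
      · rw [if_pos hle] at hx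
        have hy : MvPowerSeries.coeff (ζ - (a ⊔ b - c)) (h : MvPowerSeries (Fin n) K) ≠ 0 :=
          fun hh => hx (by rw [hh, mul_zero])
        rw [MvPolynomial.coeff_coe] at hy
        have hyle : rle r c (ζ - (a ⊔ b - c)) := by
          rcases eq_or_ne (ζ - (a ⊔ b - c)) c with hh | hh
          · exact Or.inl hh.symm
          · exact Or.inr (hc.2 _ (MvPolynomial.mem_support_iff.mpr hy) hh)
        have h1 : rle r ((a ⊔ b - c) + c) ((a ⊔ b - c) + (ζ - (a ⊔ b - c))) :=
          rle_add_left hr _ hyle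
        rwa [tsub_add_cancel_of_le hcab, add_tsub_cancel_of_le hle] at h1
      · rw [if_neg hle] at hx
        exact absurd rfl hx
    rcases this with hx | hx
    · exact key f a hf _ hx le_sup_left
    · exact key g b hg _ hx le_sup_right
  rcases hbelow with h | h
  · exact absurd (h ▸ hζ) (fun hh => hh hlcm)
  · exact h

end LocalOrder
end SpolyLemmas

section BData

variable {n s : ℕ} {K : Type*} [Field K] {r : (Fin n →₀ ℕ) → (Fin n →₀ ℕ) → Prop}
variable {G : Fin s → MvPolynomial (Fin n) K} {α : Fin s → (Fin n →₀ ℕ)}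

namespace LocalOrder

theorem exists_b (hr : IsLocalOrder r) (hα : ∀ i, IsLeadMon r (G i) (α i))
    (hNF : ∀ i j : Fin s, i ≠ j →
      ∃ (u : MvPolynomial (Fin n) K) (a : Fin s → MvPolynomial (Fin n) K),
        IsLeadMon r u 0 ∧
        u * spoly (G i) (G j) (α i) (α j) = ∑ l, a l * G l ∧
        ∀ l, a l ≠ 0 → ∃ μ ν, IsLeadMon r (spoly (G i) (G j) (α i) (α j)) μ ∧
          IsLeadMon r (a l * G l) ν ∧ (r μ ν ∨ μ = ν)) :
    ∃ b : Fin s → Fin s → Fin s → MvPowerSeries (Fin n) K, ∀ i j, i ≠ j →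
      ((∑ l, b i j l * (G l : MvPowerSeries (Fin n) K)) =
        (spoly (G i) (G j) (α i) (α j) : MvPowerSeries (Fin n) K)) ∧
      (∀ l σ, MvPowerSeries.coeff σ (b i j l) ≠ 0 → r (α i ⊔ α j) (σ + α l)) := by
  classical
  have main : ∀ i j : Fin s, ∃ bij : Fin s → MvPowerSeries (Fin n) K, i ≠ j →
      ((∑ l, bij l * (G l : MvPowerSeries (Fin n) K)) =
        (spoly (G i) (G j) (α i) (α j) : MvPowerSeries (Fin n) K)) ∧
      (∀ l σ, MvPowerSeries.coeff σ (bij l) ≠ 0 → r (α i ⊔ α j) (σ + α l)) := by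
    intro i j
    by_cases hij : i = j
    · exact ⟨0, fun h => absurd hij h⟩
    obtain ⟨u, a, hu, heq, hcond⟩ := hNF i j hij
    have h0 : MvPowerSeries.constantCoeff (u : MvPowerSeries (Fin n) K) ≠ 0 := by
      rw [← MvPowerSeries.coeff_zero_eq_constantCoeff, MvPolynomial.coeff_coe]
      exact MvPolynomial.mem_support_iff.mp hu.1
    set U : Kˣ := Units.mk0 _ h0 with hU
    set V : MvPowerSeries (Fin n) K := MvPowerSeries.invOfUnit (u : MvPowerSeries (Fin n) K) U
      with hV
    have hUV : (u : MvPowerSeries (Fin n) K) * V = 1 :=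
      MvPowerSeries.mul_invOfUnit _ _ rfl
    have hVlm : IsLMps r V 0 := by
      constructor
      · rw [MvPowerSeries.coeff_zero_eq_constantCoeff, hV,
          MvPowerSeries.constantCoeff_invOfUnit]
        exact Units.ne_zero U⁻¹
      · intro ε hε hne
        exact r_zero hr ε hne
    refine ⟨fun l => V * (a l : MvPowerSeries (Fin n) K), fun _ => ⟨?_, ?_⟩⟩
    · have hcoe : ∀ p : MvPolynomial (Fin n) K,
        (p : MvPowerSeries (Fin n) K) = MvPolynomial.coeToMvPowerSeries.ringHom p := fun _ => rfl
      have hsum : ((∑ l, a l * G l : MvPolynomial (Fin n) K) : MvPowerSeries (Fin n) K)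
          = ∑ l, (a l : MvPowerSeries (Fin n) K) * (G l : MvPowerSeries (Fin n) K) := by
        rw [hcoe, map_sum]
        refine Finset.sum_congr rfl fun l _ => ?_
        rw [← hcoe, MvPolynomial.coe_mul]
      calc (∑ l, V * (a l : MvPowerSeries (Fin n) K) * (G l : MvPowerSeries (Fin n) K))
          = V * ∑ l, (a l : MvPowerSeries (Fin n) K) * (G l : MvPowerSeries (Fin n) K) := by
            rw [Finset.mul_sum]; exact Finset.sum_congr rfl fun l _ => by ring
        _ = V * ((∑ l, a l * G l : MvPolynomial (Fin n) K) : MvPowerSeries (Fin n) K) := by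
            rw [hsum]
        _ = V * ((u * spoly (G i) (G j) (α i) (α j) : MvPolynomial (Fin n) K) :
            MvPowerSeries (Fin n) K) := by rw [← heq]
        _ = (spoly (G i) (G j) (α i) (α j) : MvPowerSeries (Fin n) K) := by
            rw [MvPolynomial.coe_mul, ← mul_assoc, mul_comm V, hUV, one_mul]
    · intro l σ hσ'
      have hσ : MvPowerSeries.coeff σ (V * (a l : MvPowerSeries (Fin n) K)) ≠ 0 := hσ'
      have hal : a l ≠ 0 := by
        intro hzz
        rw [hzz] at hσ
        simp at hσ
      obtain ⟨μ, ν', hμ, hν', hrel⟩ := hcond l hal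
      have hbl : V * (a l : MvPowerSeries (Fin n) K) ≠ 0 := by
        intro hzero; rw [hzero] at hσ; simp at hσ
      obtain ⟨lmb, hlmb⟩ := exists_isLMps hr hbl
      have hGl : IsLMps r ((G l : MvPolynomial (Fin n) K) : MvPowerSeries (Fin n) K) (α l) :=
        isLMps_coe (hα l)
      have hmul1 : IsLMps r (V * (a l : MvPowerSeries (Fin n) K) *
          (G l : MvPowerSeries (Fin n) K)) (lmb + α l) := isLMps_mul hr hlmb hGl
      have hmul2 : IsLMps r (V * (a l : MvPowerSeries (Fin n) K) *
          (G l : MvPowerSeries (Fin n) K)) ν' := by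
        have : V * (a l : MvPowerSeries (Fin n) K) * (G l : MvPowerSeries (Fin n) K)
            = V * ((a l * G l : MvPolynomial (Fin n) K) : MvPowerSeries (Fin n) K) := by
          rw [MvPolynomial.coe_mul, mul_assoc]
        rw [this]
        have := isLMps_mul hr hVlm (isLMps_coe (r := r) hν')
        rwa [zero_add] at this
      have hlm_eq : lmb + α l = ν' := isLMps_unique hr hmul1 hmul2
      have hσle : rle r lmb σ := by
        rcases eq_or_ne σ lmb with h | h
        · exact Or.inl h.symm
        · exact Or.inr (hlmb.2 σ hσ h)
      have h1 : rle r ν' (σ + α l) := by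
        rw [← hlm_eq]
        exact rle_add hr (α l) hσle
      have h2 : r (α i ⊔ α j) μ := by
        apply spoly_coeff_bound hr (hα i) (hα j)
        rw [MvPolynomial.coeff_coe]
        exact MvPolynomial.mem_support_iff.mp hμ.1
      have h3 : rle r μ ν' := by
        rcases hrel with h | h
        · exact Or.inr h
        · exact Or.inl h
      exact r_of_r_of_rle hr (r_of_r_of_rle hr h2 h3) h1
  choose b hb using main
  exact ⟨b, hb⟩

end LocalOrder
end BData

section PhiLemmas

variable {n s : ℕ} {K : Type*} [Field K] {r : (Fin n →₀ ℕ) → (Fin n →₀ ℕ) → Prop}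
variable {G : Fin s → MvPolynomial (Fin n) K} {α : Fin s → (Fin n →₀ ℕ)}

namespace LocalOrder

/-- Decomposition of a nonzero coefficient of `∑ l, a l * G l`. -/
theorem exists_of_coeff_sum_ne_zero {a : Fin s → MvPowerSeries (Fin n) K} {δ : Fin n →₀ ℕ}
    (h : MvPowerSeries.coeff δ (∑ l, a l * (G l : MvPowerSeries (Fin n) K)) ≠ 0) :
    ∃ l x y, MvPowerSeries.coeff x (a l) ≠ 0 ∧ (G l).coeff y ≠ 0 ∧ x + y = δ := by
  classical
  rw [map_sum] at h
  obtain ⟨l, _, hl⟩ := Finset.exists_ne_zero_of_sum_ne_zero h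
  rw [MvPowerSeries.coeff_mul] at hl
  obtain ⟨⟨x, y⟩, hmem, hval⟩ := Finset.exists_ne_zero_of_sum_ne_zero hl
  rw [Finset.HasAntidiagonal.mem_antidiagonal] at hmem
  refine ⟨l, x, y, fun hh => hval (by simp [hh]), fun hh => ?_, hmem⟩
  rw [MvPolynomial.coeff_coe] at hval
  exact hval (by simp [hh])

variable (hr : IsLocalOrder r)
include hr

theorem rle_of_levels_bound {a : Fin s → MvPowerSeries (Fin n) K} {γ : Fin n →₀ ℕ}
    (hα : ∀ i, IsLeadMon r (G i) (α i))
    (hlev : ∀ l ν, MvPowerSeries.coeff ν (a l) ≠ 0 → rle r γ (ν + α l)) {δ : Fin n →₀ ℕ}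
    (h : MvPowerSeries.coeff δ (∑ l, a l * (G l : MvPowerSeries (Fin n) K)) ≠ 0) :
    rle r γ δ := by
  obtain ⟨l, x, y, hx, hy, hxy⟩ := exists_of_coeff_sum_ne_zero h
  have h1 : rle r γ (x + α l) := hlev l x hx
  have h2 : rle r (α l) y := by
    rcases eq_or_ne y (α l) with hh | hh
    · exact Or.inl hh.symm
    · exact Or.inr ((hα l).2 y (MvPolynomial.mem_support_iff.mpr hy) hh)
  have h3 : rle r (x + α l) (x + y) := rle_add_left hr x h2
  rw [hxy] at h3
  exact rle_trans hr h1 h3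

/-- The coefficient of `∑ l, a l * G l` at a monomial `γ` dominating all levels. -/
theorem coeff_at_top {a : Fin s → MvPowerSeries (Fin n) K} {γ : Fin n →₀ ℕ}
    (hα : ∀ i, IsLeadMon r (G i) (α i))
    (hlev : ∀ l ν, MvPowerSeries.coeff ν (a l) ≠ 0 → rle r γ (ν + α l)) :
    MvPowerSeries.coeff γ (∑ l, a l * (G l : MvPowerSeries (Fin n) K)) =
      ∑ l, (if α l ≤ γ then
        MvPowerSeries.coeff (γ - α l) (a l) * (G l).coeff (α l) else 0) := by
  classical
  rw [map_sum]
  refine Finset.sum_congr rfl fun l _ => ?_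
  have key : ∀ x y : Fin n →₀ ℕ, x + y = γ → (x, y) ≠ (γ - α l, α l) →
      MvPowerSeries.coeff x (a l) *
        MvPowerSeries.coeff y ((G l : MvPowerSeries (Fin n) K)) = 0 := by
    intro x y hxy hne
    by_contra hval
    have hx : MvPowerSeries.coeff x (a l) ≠ 0 := fun hh => hval (by simp [hh])
    have hy : (G l).coeff y ≠ 0 := by
      intro hh
      rw [MvPolynomial.coeff_coe] at hval
      exact hval (by simp [hh])
    have hyne : y ≠ α l := by
      intro hh
      subst hh
      have hxval : x = γ - α l := eq_tsub_of_add_eq hxy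
      exact hne (by rw [hxval])
    have h2 : r (α l) y := (hα l).2 y (MvPolynomial.mem_support_iff.mpr hy) hyne
    have h3 : r (x + α l) γ := by
      have := radd_left hr x h2
      rwa [hxy] at this
    exact rirrefl hr (r_of_rle_of_r hr (hlev l x hx) h3)
  by_cases hle : α l ≤ γ
  · rw [if_pos hle, MvPowerSeries.coeff_mul]
    rw [Finset.sum_eq_single_of_mem (γ - α l, α l)
      (Finset.HasAntidiagonal.mem_antidiagonal.mpr (tsub_add_cancel_of_le hle))]
    · rw [MvPolynomial.coeff_coe]
    · rintro ⟨x, y⟩ hmem hne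
      exact key x y (Finset.HasAntidiagonal.mem_antidiagonal.mp hmem) hne
  · rw [if_neg hle, MvPowerSeries.coeff_mul]
    apply Finset.sum_eq_zero
    rintro ⟨x, y⟩ hmem
    apply key x y (Finset.HasAntidiagonal.mem_antidiagonal.mp hmem)
    intro hh
    rw [Prod.mk.injEq] at hh
    apply hle
    have hxy := Finset.HasAntidiagonal.mem_antidiagonal.mp hmem
    rw [hh.2] at hxy
    rw [← hxy]
    exact le_add_self
end LocalOrder
end PhiLemmas

section Telescope

variable {n s : ℕ} {K : Type*} [Field K] {r : (Fin n →₀ ℕ) → (Fin n →₀ ℕ) → Prop}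
variable {G : Fin s → MvPolynomial (Fin n) K} {α : Fin s → (Fin n →₀ ℕ)}

namespace LocalOrder

/-- Rewriting a cancelling top slice using the S-polynomial representations. -/
theorem tel (hr : IsLocalOrder r) (hα : ∀ i, IsLeadMon r (G i) (α i))
    {b : Fin s → Fin s → Fin s → MvPowerSeries (Fin n) K}
    (hb : ∀ i j, i ≠ j →
      ((∑ l, b i j l * (G l : MvPowerSeries (Fin n) K)) =
        (spoly (G i) (G j) (α i) (α j) : MvPowerSeries (Fin n) K)) ∧
      (∀ l σ, MvPowerSeries.coeff σ (b i j l) ≠ 0 → r (α i ⊔ α j) (σ + α l)))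
    (γ : Fin n →₀ ℕ) (S : Finset (Fin s)) :
    ∀ c : Fin s → K, (∀ i ∈ S, α i ≤ γ) → (∑ i ∈ S, c i * (G i).coeff (α i)) = 0 →
    ∃ corr : Fin s → MvPowerSeries (Fin n) K,
      ((∑ l, corr l * (G l : MvPowerSeries (Fin n) K)) =
        ∑ i ∈ S, (MvPowerSeries.monomial (γ - α i) (c i)) * (G i : MvPowerSeries (Fin n) K)) ∧
      (∀ l ν, MvPowerSeries.coeff ν (corr l) ≠ 0 → r γ (ν + α l) ∧
        ∃ p q, p ≠ q ∧ (α p ⊔ α q) ≤ γ ∧ ∃ σ, MvPowerSeries.coeff σ (b p q l) ≠ 0 ∧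
          ν = (γ - (α p ⊔ α q)) + σ) := by
  classical
  induction S using Finset.induction_on with
  | empty =>
    intro c _ _
    exact ⟨0, by simp, fun l ν h => absurd (by simp) h⟩
  | @insert i S' hi ih =>
    intro c hS hsum
    have hlci : (G i).coeff (α i) ≠ 0 := MvPolynomial.mem_support_iff.mp (hα i).1
    rcases S'.eq_empty_or_nonempty with rfl | ⟨j, hj⟩
    · rw [Finset.sum_insert (by simp), Finset.sum_empty, add_zero] at hsum
      have hci : c i = 0 := by
        rcases mul_eq_zero.mp hsum with h | h
        · exact h
        · exact absurd h hlci
      refine ⟨0, by simp [hci], fun l ν h => absurd (by simp) h⟩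
    · have hij : i ≠ j := fun hh => hi (hh ▸ hj)
      have hlcj : (G j).coeff (α j) ≠ 0 := MvPolynomial.mem_support_iff.mp (hα j).1
      set lci := (G i).coeff (α i) with hlci_def
      set lcj := (G j).coeff (α j) with hlcj_def
      set c' : Fin s → K := Function.update c j (c j + c i * lci * lcj⁻¹) with hc'
      have hc'ne : ∀ k, k ≠ j → c' k = c k := fun k hk => Function.update_of_ne hk _ c
      have hS' : ∀ k ∈ S', α k ≤ γ := fun k hk => hS k (Finset.mem_insert_of_mem hk)
      have hsum' : (∑ k ∈ S', c' k * (G k).coeff (α k)) = 0 := by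
        rw [← Finset.add_sum_erase _ _ hj]
        have h1 : (∑ k ∈ S'.erase j, c' k * (G k).coeff (α k))
            = ∑ k ∈ S'.erase j, c k * (G k).coeff (α k) := by
          refine Finset.sum_congr rfl fun k hk => ?_
          rw [hc'ne k (Finset.ne_of_mem_erase hk)]
        rw [h1]
        have h2 : c' j = c j + c i * lci * lcj⁻¹ := Function.update_self _ _ _
        rw [h2, add_mul, mul_assoc (c i * lci), inv_mul_cancel₀ hlcj, mul_one]
        have h3 := hsum
        rw [Finset.sum_insert hi, ← Finset.add_sum_erase _ _ hj] at h3
        -- h3 : c i * lci + (c j * lcj + rest) = 0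
        simp only [← hlci_def, ← hlcj_def] at h3 ⊢
        linear_combination h3
      obtain ⟨corr', hcorr'1, hcorr'2⟩ := ih c' hS' hsum'
      set lcm := α i ⊔ α j with hlcm_def
      have hlcmγ : lcm ≤ γ := sup_le (hS i (Finset.mem_insert_self _ _))
        (hS j (Finset.mem_insert_of_mem hj))
      set add : Fin s → MvPowerSeries (Fin n) K :=
        fun l => (MvPowerSeries.monomial (γ - lcm) (c i * lci)) * b i j l with hadd
      refine ⟨fun l => corr' l + add l, ?_, ?_⟩
      · have hkey : (∑ l, add l * (G l : MvPowerSeries (Fin n) K))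
            = MvPowerSeries.monomial (γ - α i) (c i) * (G i : MvPowerSeries (Fin n) K)
              - MvPowerSeries.monomial (γ - α j) (c i * lci * lcj⁻¹) *
                (G j : MvPowerSeries (Fin n) K) := by
          have h1 : (∑ l, add l * (G l : MvPowerSeries (Fin n) K))
              = (MvPowerSeries.monomial (γ - lcm) (c i * lci)) *
                ∑ l, b i j l * (G l : MvPowerSeries (Fin n) K) := by
            rw [Finset.mul_sum]
            exact Finset.sum_congr rfl fun l _ => by rw [hadd, mul_assoc]
          rw [h1, (hb i j hij).1, spoly_coe_eq, mul_sub, ← mul_assoc, ← mul_assoc,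
            MvPowerSeries.monomial_mul_monomial, MvPowerSeries.monomial_mul_monomial,
            tsub_add_tsub_cancel hlcmγ le_sup_left,
            tsub_add_tsub_cancel hlcmγ le_sup_right]
          have e1 : c i * lci * lci⁻¹ = c i := by
            rw [mul_assoc, mul_inv_cancel₀ hlci, mul_one]
          rw [e1]
        calc (∑ l, (corr' l + add l) * (G l : MvPowerSeries (Fin n) K))
            = (∑ l, corr' l * (G l : MvPowerSeries (Fin n) K))
              + ∑ l, add l * (G l : MvPowerSeries (Fin n) K) := by
              rw [← Finset.sum_add_distrib]
              exact Finset.sum_congr rfl fun l _ => by ring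
          _ = ∑ k ∈ insert i S',
              (MvPowerSeries.monomial (γ - α k) (c k)) * (G k : MvPowerSeries (Fin n) K) := by
              rw [hcorr'1, hkey, Finset.sum_insert hi, ← Finset.add_sum_erase _ _ hj,
                ← Finset.add_sum_erase _ (fun k => (MvPowerSeries.monomial (γ - α k) (c k)) *
                  (G k : MvPowerSeries (Fin n) K)) hj]
              have h4 : (∑ k ∈ S'.erase j, (MvPowerSeries.monomial (γ - α k) (c' k)) *
                  (G k : MvPowerSeries (Fin n) K))
                  = ∑ k ∈ S'.erase j, (MvPowerSeries.monomial (γ - α k) (c k)) *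
                  (G k : MvPowerSeries (Fin n) K) := by
                refine Finset.sum_congr rfl fun k hk => ?_
                rw [hc'ne k (Finset.ne_of_mem_erase hk)]
              rw [h4]
              have h5 : c' j = c j + c i * lci * lcj⁻¹ := Function.update_self _ _ _
              rw [h5, map_add, add_mul]
              ring
      · intro l ν hν
        rcases eq_or_ne (MvPowerSeries.coeff ν (corr' l)) 0 with hc0 | hc0
        · have haddν : MvPowerSeries.coeff ν (add l) ≠ 0 := by
            intro hh
            rw [map_add, hc0, hh, add_zero] at hν
            exact hν rfl
          rw [hadd, MvPowerSeries.coeff_monomial_mul] at haddν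
          by_cases hle : γ - lcm ≤ ν
          · rw [if_pos hle] at haddν
            have hbσ : MvPowerSeries.coeff (ν - (γ - lcm)) (b i j l) ≠ 0 :=
              fun hh => haddν (by rw [hh, mul_zero])
            have hνeq : ν = (γ - lcm) + (ν - (γ - lcm)) := (add_tsub_cancel_of_le hle).symm
            constructor
            · have hlev := (hb i j hij).2 l _ hbσ
              have := radd_left hr (γ - lcm) hlev
              rw [tsub_add_cancel_of_le hlcmγ] at this
              rw [hνeq, add_assoc]
              exact this
            · exact ⟨i, j, hij, hlcmγ, ν - (γ - lcm), hbσ, hνeq⟩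
          · rw [if_neg hle] at haddν
            exact absurd rfl haddν
        · exact hcorr'2 l ν hc0

end LocalOrder
end Telescope

section RepSection

variable {n s : ℕ} {K : Type*} [Field K]

/-- A representation of `h` as a combination of the `G l`, with its top level. -/
@[ext]
structure SRep (r : (Fin n →₀ ℕ) → (Fin n →₀ ℕ) → Prop)
    (G : Fin s → MvPolynomial (Fin n) K) (α : Fin s → (Fin n →₀ ℕ))
    (h : MvPowerSeries (Fin n) K) : Type _ where
  a : Fin s → MvPowerSeries (Fin n) K
  top : Fin n →₀ ℕ
  hPhi : (∑ l, a l * (G l : MvPowerSeries (Fin n) K)) = h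
  htop_mem : ∃ l ν, MvPowerSeries.coeff ν (a l) ≠ 0 ∧ ν + α l = top
  htop_max : ∀ l ν, MvPowerSeries.coeff ν (a l) ≠ 0 → rle r top (ν + α l)

/-- Positions in the tuple that a rewrite at top level `γ` may touch. -/
def TouchP {n s : ℕ} {K : Type*} [Field K] (α : Fin s → (Fin n →₀ ℕ))
    (b : Fin s → Fin s → Fin s → MvPowerSeries (Fin n) K)
    (γ : Fin n →₀ ℕ) (l : Fin s) (ν : Fin n →₀ ℕ) : Prop :=
  (α l ≤ γ ∧ ν = γ - α l) ∨
    ∃ p q : Fin s, p ≠ q ∧ (α p ⊔ α q) ≤ γ ∧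
      ∃ σ, MvPowerSeries.coeff σ (b p q l) ≠ 0 ∧ ν = (γ - (α p ⊔ α q)) + σ

/-- The processing order on representations. -/
def SRep.le {r : (Fin n →₀ ℕ) → (Fin n →₀ ℕ) → Prop}
    {G : Fin s → MvPolynomial (Fin n) K} {α : Fin s → (Fin n →₀ ℕ)}
    {h : MvPowerSeries (Fin n) K}
    (b : Fin s → Fin s → Fin s → MvPowerSeries (Fin n) K)
    (A B : SRep r G α h) : Prop :=
  rle r A.top B.top ∧
    ∀ l ν, MvPowerSeries.coeff ν (B.a l) ≠ MvPowerSeries.coeff ν (A.a l) →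
      ∃ γ, TouchP α b γ l ν ∧ rle r A.top γ ∧ r γ B.top

namespace LocalOrder

variable {r : (Fin n →₀ ℕ) → (Fin n →₀ ℕ) → Prop}
variable {G : Fin s → MvPolynomial (Fin n) K} {α : Fin s → (Fin n →₀ ℕ)}
variable {h : MvPowerSeries (Fin n) K}
variable {b : Fin s → Fin s → Fin s → MvPowerSeries (Fin n) K}

theorem SRep.le_refl (A : SRep r G α h) : SRep.le b A A :=
  ⟨Or.inl rfl, fun _ _ hne => absurd rfl hne⟩

variable (hr : IsLocalOrder r)
include hr

theorem SRep.le_trans {A B C : SRep r G α h} (hAB : SRep.le b A B) (hBC : SRep.le b B C) :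
    SRep.le b A C := by
  refine ⟨rle_trans hr hAB.1 hBC.1, fun l ν hne => ?_⟩
  rcases eq_or_ne (MvPowerSeries.coeff ν (C.a l)) (MvPowerSeries.coeff ν (B.a l)) with
    hCB | hCB
  · obtain ⟨γ, hT, h1, h2⟩ := hAB.2 l ν (by rw [← hCB]; exact hne)
    exact ⟨γ, hT, h1, r_of_r_of_rle hr h2 hBC.1⟩
  · obtain ⟨γ, hT, h1, h2⟩ := hBC.2 l ν hCB
    exact ⟨γ, hT, rle_trans hr hAB.1 h1, h2⟩

theorem SRep.le_antisymm {A B : SRep r G α h} (hAB : SRep.le b A B) (hBA : SRep.le b B A) :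
    A = B := by
  have htop : A.top = B.top := rle_antisymm hr hAB.1 hBA.1
  have ha : A.a = B.a := by
    funext l
    apply MvPowerSeries.ext
    intro ν
    by_contra hne
    obtain ⟨γ, _, h1, h2⟩ := hAB.2 l ν (Ne.symm hne)
    rw [htop] at h1
    rcases h1 with hh | hh
    · rw [hh] at h2; exact rirrefl hr h2
    · exact rasym hr hh h2
  exact SRep.ext ha htop

/-- The rewrite step: a representation whose top strictly dominates the lead monomial
of `h` can be strictly improved. -/
theorem SRep.step (hα : ∀ i, IsLeadMon r (G i) (α i))
    (hb : ∀ i j, i ≠ j →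
      ((∑ l, b i j l * (G l : MvPowerSeries (Fin n) K)) =
        (spoly (G i) (G j) (α i) (α j) : MvPowerSeries (Fin n) K)) ∧
      (∀ l σ, MvPowerSeries.coeff σ (b i j l) ≠ 0 → r (α i ⊔ α j) (σ + α l)))
    (hh : h ≠ 0) {β : Fin n →₀ ℕ} (hβ : IsLMps r h β)
    (A : SRep r G α h) (hA : r A.top β) :
    ∃ B : SRep r G α h, SRep.le b A B ∧ r A.top B.top := by
  classical
  obtain ⟨a, γ, hPhi, htop_mem, htop_max⟩ := A
  simp only at hA ⊢
  -- the coefficient of `h` at `γ` vanishes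
  have hcγ : MvPowerSeries.coeff γ h = 0 := by
    by_contra hcon
    rcases eq_or_ne γ β with hh' | hh'
    · rw [hh'] at hA; exact rirrefl hr hA
    · exact rasym hr hA (hβ.2 γ hcon hh')
  set c : Fin s → K := fun l => if α l ≤ γ then MvPowerSeries.coeff (γ - α l) (a l) else 0
    with hc
  set S : Finset (Fin s) := Finset.univ.filter (fun l => α l ≤ γ) with hSdef
  have hS : ∀ i ∈ S, α i ≤ γ := fun i hi => (Finset.mem_filter.mp hi).2
  have hsum : (∑ i ∈ S, c i * (G i).coeff (α i)) = 0 := by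
    have h1 := coeff_at_top hr hα htop_max
    rw [hPhi, hcγ] at h1
    rw [hSdef, Finset.sum_filter]
    have h2 : (∑ l, if α l ≤ γ then c l * (G l).coeff (α l) else 0)
        = ∑ l, if α l ≤ γ then
          MvPowerSeries.coeff (γ - α l) (a l) * (G l).coeff (α l) else 0 :=
      Finset.sum_congr rfl fun l _ => by by_cases hle : α l ≤ γ <;> simp [hc, hle]
    rw [h2, ← h1]
  obtain ⟨corr, hcorr1, hcorr2⟩ := tel hr hα hb γ S c hS hsum
  -- the removed top slice
  set τ : Fin s → MvPowerSeries (Fin n) K :=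
    fun l => MvPowerSeries.monomial (γ - α l) (c l) with hτ
  have hτsum : (∑ l, τ l * (G l : MvPowerSeries (Fin n) K))
      = ∑ i ∈ S, (MvPowerSeries.monomial (γ - α i) (c i)) * (G i : MvPowerSeries (Fin n) K) := by
    rw [hSdef, Finset.sum_filter]
    refine Finset.sum_congr rfl fun l _ => ?_
    by_cases hle : α l ≤ γ
    · simp [hτ, hle]
    · simp [hτ, hc, hle]
  set a' : Fin s → MvPowerSeries (Fin n) K := fun l => a l - τ l + corr l with ha'
  have hPhi' : (∑ l, a' l * (G l : MvPowerSeries (Fin n) K)) = h := by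
    have heq : (∑ l, a' l * (G l : MvPowerSeries (Fin n) K))
        = (∑ l, a l * (G l : MvPowerSeries (Fin n) K))
          - (∑ l, τ l * (G l : MvPowerSeries (Fin n) K))
          + (∑ l, corr l * (G l : MvPowerSeries (Fin n) K)) := by
      rw [← Finset.sum_sub_distrib, ← Finset.sum_add_distrib]
      refine Finset.sum_congr rfl fun l _ => ?_
      simp only [ha']
      ring
    rw [heq, hτsum, hcorr1, hPhi]
    ring
  -- all levels of `a'` are strictly below `γ`
  have hlev' : ∀ l ν, MvPowerSeries.coeff ν (a' l) ≠ 0 → r γ (ν + α l) := by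
    intro l ν hν
    rcases eq_or_ne (MvPowerSeries.coeff ν (corr l)) 0 with hc0 | hc0
    · have hAτ : MvPowerSeries.coeff ν (a l) - MvPowerSeries.coeff ν (τ l) ≠ 0 := by
        intro hzz
        apply hν
        simp only [ha', map_add, map_sub, hzz, hc0, zero_add]
      by_cases hcase : α l ≤ γ ∧ ν = γ - α l
      · exfalso
        apply hAτ
        simp only [hτ, hc, hcase.2, MvPowerSeries.coeff_monomial_same, if_pos hcase.1]
        exact sub_self _
      · have hτν : MvPowerSeries.coeff ν (τ l) = 0 := by
          simp only [hτ, MvPowerSeries.coeff_monomial]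
          by_cases h1 : ν = γ - α l
          · rcases not_and_or.mp hcase with h2 | h2
            · simp [h1, hc, h2]
            · exact absurd h1 h2
          · rw [if_neg h1]
        have hAν : MvPowerSeries.coeff ν (a l) ≠ 0 := by
          rw [hτν, sub_zero] at hAτ
          exact hAτ
        rcases htop_max l ν hAν with heq | hlt
        · exfalso
          apply hcase
          have hαle : α l ≤ γ := by rw [heq]; exact le_add_self
          exact ⟨hαle, eq_tsub_of_add_eq heq.symm⟩
        · exact hlt
    · exact (hcorr2 l ν hc0).1
  -- the new tuple is nonzero
  have hne' : ∃ l ν, MvPowerSeries.coeff ν (a' l) ≠ 0 := by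
    by_contra hcon
    push_neg at hcon
    apply hh
    rw [← hPhi']
    refine Finset.sum_eq_zero fun l _ => ?_
    have hz : a' l = 0 := MvPowerSeries.ext fun ν => by rw [hcon l ν]; simp
    rw [hz, zero_mul]
  have hex : ∃ m, (∃ l ν, MvPowerSeries.coeff ν (a' l) ≠ 0 ∧ ν + α l = m) ∧
      (∀ l ν, MvPowerSeries.coeff ν (a' l) ≠ 0 → rle r m (ν + α l)) := by
    obtain ⟨m, hm, hmax⟩ := exists_rmax hr
      {δ | ∃ l ν, MvPowerSeries.coeff ν (a' l) ≠ 0 ∧ ν + α l = δ}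
      (by obtain ⟨l, ν, hlν⟩ := hne'; exact ⟨ν + α l, l, ν, hlν, rfl⟩)
    refine ⟨m, hm, fun l ν hν => ?_⟩
    rcases eq_or_ne m (ν + α l) with hh' | hh'
    · exact Or.inl hh'
    · exact Or.inr (hmax _ ⟨l, ν, hν, rfl⟩ (Ne.symm hh'))
  obtain ⟨top', htop'mem, htop'max⟩ := hex
  have htopstrict : r γ top' := by
    obtain ⟨l, ν, hν, hνm⟩ := htop'mem
    rw [← hνm]
    exact hlev' l ν hν
  refine ⟨⟨a', top', hPhi', htop'mem, htop'max⟩, ⟨?_, ?_⟩, htopstrict⟩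
  · exact Or.inr htopstrict
  · intro l ν hne
    simp only at hne
    refine ⟨γ, ?_, Or.inl rfl, htopstrict⟩
    have hdiff : MvPowerSeries.coeff ν (τ l) ≠ 0 ∨ MvPowerSeries.coeff ν (corr l) ≠ 0 := by
      by_contra hcon
      push_neg at hcon
      apply hne
      simp only [ha', map_add, map_sub, hcon.1, hcon.2, sub_zero, add_zero]
    rcases hdiff with hd | hd
    · left
      simp only [hτ, MvPowerSeries.coeff_monomial] at hd
      by_cases h1 : ν = γ - α l
      · refine ⟨?_, h1⟩
        by_contra h2
        rw [if_pos h1] at hd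
        simp [hc, h2] at hd
      · rw [if_neg h1] at hd; exact absurd rfl hd
    · right
      obtain ⟨-, p, q, hpq, hle, σ, hσ, hνeq⟩ := hcorr2 l ν hd
      exact ⟨p, q, hpq, hle, σ, hσ, hνeq⟩

end LocalOrder
end RepSection

section ChainSection

variable {n s : ℕ} {K : Type*} [Field K]
variable {r : (Fin n →₀ ℕ) → (Fin n →₀ ℕ) → Prop}
variable {G : Fin s → MvPolynomial (Fin n) K} {α : Fin s → (Fin n →₀ ℕ)}
variable {h : MvPowerSeries (Fin n) K}
variable {b : Fin s → Fin s → Fin s → MvPowerSeries (Fin n) K}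

namespace LocalOrder

/-- The set of tops that can touch a given position is finite. -/
theorem touch_finite (l : Fin s) (ν : Fin n →₀ ℕ) :
    {γ : Fin n →₀ ℕ | TouchP α b γ l ν}.Finite := by
  classical
  apply Set.Finite.subset (s := insert (ν + α l)
    (⋃ p : Fin s, ⋃ q : Fin s, (fun σ => (ν - σ) + (α p ⊔ α q)) '' (Set.Iic ν)))
  · apply Set.Finite.insert
    apply Set.finite_iUnion
    intro p
    apply Set.finite_iUnion
    intro q
    exact (Set.finite_Iic ν).image _
  · rintro γ (⟨hle, hν⟩ | ⟨p, q, hpq, hle, σ, hσ, hν⟩)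
    · left
      rw [hν, tsub_add_cancel_of_le hle]
    · right
      refine Set.mem_iUnion.mpr ⟨p, Set.mem_iUnion.mpr ⟨q, ⟨σ, ?_, ?_⟩⟩⟩
      · rw [Set.mem_Iic, hν]; exact le_add_self
      · have h1 : ν - σ = γ - (α p ⊔ α q) := by rw [hν, add_tsub_cancel_right]
        show ν - σ + (α p ⊔ α q) = γ
        rw [h1]
        exact tsub_add_cancel_of_le hle

variable (hr : IsLocalOrder r)
include hr

/-- Any finite subset of a chain has an upper bound in the chain. -/
theorem chain_finset_bound {C : Set (SRep r G α h)} (hC : IsChain (SRep.le b) C)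
    {A₀ : SRep r G α h} (hA₀ : A₀ ∈ C) (W : Finset (SRep r G α h)) (hW : ↑W ⊆ C) :
    ∃ X ∈ C, ∀ Y ∈ W, SRep.le b Y X := by
  classical
  induction W using Finset.induction_on with
  | empty => exact ⟨A₀, hA₀, fun Y hY => absurd hY (Finset.notMem_empty Y)⟩
  | @insert x W' hx ih =>
    have hW' : ↑W' ⊆ C := fun y hy => hW (Finset.mem_coe.mpr (Finset.mem_insert_of_mem hy))
    obtain ⟨X, hXC, hXbd⟩ := ih hW'
    have hxC : x ∈ C := hW (Finset.mem_coe.mpr (Finset.mem_insert_self _ _))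
    rcases eq_or_ne x X with rfl | hne
    · exact ⟨x, hxC, fun Y hY => by
        rcases Finset.mem_insert.mp hY with rfl | hY'
        · exact SRep.le_refl Y
        · exact hXbd Y hY'⟩
    · rcases hC hxC hXC hne with hle | hle
      · exact ⟨X, hXC, fun Y hY => by
          rcases Finset.mem_insert.mp hY with rfl | hY'
          · exact hle
          · exact hXbd Y hY'⟩
      · exact ⟨x, hxC, fun Y hY => by
          rcases Finset.mem_insert.mp hY with rfl | hY'
          · exact SRep.le_refl Y
          · exact SRep.le_trans hr (hXbd Y hY') hle⟩

/-- Every nonempty chain of representations has an upper bound. -/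
theorem chain_bound (hh : h ≠ 0)
    {C : Set (SRep r G α h)} (hC : IsChain (SRep.le b) C) (hne : C.Nonempty) :
    ∃ UB : SRep r G α h, ∀ A ∈ C, SRep.le b A UB := by
  classical
  obtain ⟨A₀, hA₀⟩ := hne
  -- settlers: elements of the chain past which a coefficient never changes
  have hsett : ∀ (l : Fin s) (ν : Fin n →₀ ℕ), ∃ A, A ∈ C ∧ ∀ B ∈ C, SRep.le b A B →
      MvPowerSeries.coeff ν (B.a l) = MvPowerSeries.coeff ν (A.a l) := by
    intro l ν
    have hwit : ∀ γ : Fin n →₀ ℕ, ∃ A : SRep r G α h, A ∈ C ∧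
        ((∃ B ∈ C, r γ B.top) → r γ A.top) := by
      intro γ
      by_cases hcase : ∃ B ∈ C, r γ B.top
      · obtain ⟨B, hB, hrB⟩ := hcase
        exact ⟨B, hB, fun _ => hrB⟩
      · exact ⟨A₀, hA₀, fun hcon => absurd hcon hcase⟩
    choose w hw1 hw2 using hwit
    set Ffin := (touch_finite (α := α) (b := b) l ν).toFinset with hFfin
    obtain ⟨X, hXC, hXbd⟩ := chain_finset_bound hr hC hA₀ (Ffin.image w ∪ {A₀})
      (by
        intro y hy
        rcases Finset.mem_union.mp hy with hy' | hy'
        · obtain ⟨γ, _, rfl⟩ := Finset.mem_image.mp hy'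
          exact hw1 γ
        · rw [Finset.mem_singleton.mp hy']
          exact hA₀)
    refine ⟨X, hXC, fun B hB hXB => ?_⟩
    by_contra hneq
    obtain ⟨γ, hT, hXγ, hγB⟩ := hXB.2 l ν hneq
    have hγF : γ ∈ Ffin := by
      rw [hFfin, Set.Finite.mem_toFinset]
      exact hT
    have hwγ : r γ (w γ).top := hw2 γ ⟨B, hB, hγB⟩
    have hwγX : SRep.le b (w γ) X :=
      hXbd _ (Finset.mem_union_left _ (Finset.mem_image_of_mem w hγF))
    have h1 : rle r (w γ).top γ := rle_trans hr hwγX.1 hXγ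
    exact rirrefl hr (r_of_rle_of_r hr h1 hwγ)
  choose sett hsett1 hsett2 using hsett
  -- the limit tuple
  set abar : Fin s → MvPowerSeries (Fin n) K :=
    fun l => (fun ν => MvPowerSeries.coeff ν ((sett l ν).a l) : MvPowerSeries (Fin n) K)
    with habar_def
  have habar : ∀ l ν, MvPowerSeries.coeff ν (abar l)
      = MvPowerSeries.coeff ν ((sett l ν).a l) := fun l ν => rfl
  -- common late elements matching `abar` on finitely many positions
  have hP2 : ∀ (T : Finset (Fin s × (Fin n →₀ ℕ))) (A : SRep r G α h), A ∈ C →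
      ∃ B ∈ C, SRep.le b A B ∧ ∀ p ∈ T,
        MvPowerSeries.coeff p.2 (abar p.1) = MvPowerSeries.coeff p.2 (B.a p.1) := by
    intro T A hA
    obtain ⟨X, hXC, hXbd⟩ := chain_finset_bound hr hC hA₀
      (T.image (fun p => sett p.1 p.2) ∪ {A})
      (by
        intro y hy
        rcases Finset.mem_union.mp hy with hy' | hy'
        · obtain ⟨p, _, rfl⟩ := Finset.mem_image.mp hy'
          exact hsett1 p.1 p.2
        · rw [Finset.mem_singleton.mp hy']
          exact hA)
    refine ⟨X, hXC, hXbd A (Finset.mem_union_right _ (Finset.mem_singleton_self A)), ?_⟩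
    intro p hp
    have hp' : SRep.le b (sett p.1 p.2) X :=
      hXbd _ (Finset.mem_union_left _ (Finset.mem_image_of_mem _ hp))
    rw [habar]
    exact (hsett2 p.1 p.2 X hXC hp').symm
  -- the limit tuple still represents h
  have hPhibar : (∑ l, abar l * (G l : MvPowerSeries (Fin n) K)) = h := by
    apply MvPowerSeries.ext
    intro δ
    obtain ⟨B, hBC, -, hBeq⟩ := hP2 (Finset.univ ×ˢ Finset.Iic δ) A₀ hA₀
    have hstep : MvPowerSeries.coeff δ (∑ l, abar l * (G l : MvPowerSeries (Fin n) K))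
        = MvPowerSeries.coeff δ (∑ l, B.a l * (G l : MvPowerSeries (Fin n) K)) := by
      rw [map_sum, map_sum]
      refine Finset.sum_congr rfl fun l _ => ?_
      rw [MvPowerSeries.coeff_mul, MvPowerSeries.coeff_mul]
      refine Finset.sum_congr rfl fun xy hxy => ?_
      have hx : xy.1 ≤ δ := by
        have := Finset.HasAntidiagonal.mem_antidiagonal.mp hxy
        rw [← this]
        exact le_self_add
      have := hBeq (l, xy.1) (Finset.mem_product.mpr ⟨Finset.mem_univ l, Finset.mem_Iic.mpr hx⟩)
      rw [this]
    rw [hstep, B.hPhi]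
  -- nonemptiness of the level set of the limit tuple
  have hne' : ∃ l ν, MvPowerSeries.coeff ν (abar l) ≠ 0 := by
    by_contra hcon
    push_neg at hcon
    apply hh
    rw [← hPhibar]
    refine Finset.sum_eq_zero fun l _ => ?_
    have hz : abar l = 0 := MvPowerSeries.ext fun ν => by rw [hcon l ν]; simp
    rw [hz, zero_mul]
  have hex : ∃ m, (∃ l ν, MvPowerSeries.coeff ν (abar l) ≠ 0 ∧ ν + α l = m) ∧
      (∀ l ν, MvPowerSeries.coeff ν (abar l) ≠ 0 → rle r m (ν + α l)) := by
    obtain ⟨m, hm, hmax⟩ := exists_rmax hr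
      {δ | ∃ l ν, MvPowerSeries.coeff ν (abar l) ≠ 0 ∧ ν + α l = δ}
      (by obtain ⟨l, ν, hlν⟩ := hne'; exact ⟨ν + α l, l, ν, hlν, rfl⟩)
    refine ⟨m, hm, fun l ν hν => ?_⟩
    rcases eq_or_ne m (ν + α l) with hh' | hh'
    · exact Or.inl hh'
    · exact Or.inr (hmax _ ⟨l, ν, hν, rfl⟩ (Ne.symm hh'))
  obtain ⟨mtop, hmtop_mem, hmtop_max⟩ := hex
  -- every element of the chain has top at least the limit top
  have hFtop : ∀ A ∈ C, rle r A.top mtop := by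
    intro A hA
    obtain ⟨l, ν, hν, hνm⟩ := hmtop_mem
    obtain ⟨B, hBC, hAB, hBeq⟩ := hP2 {(l, ν)} A hA
    have hBν : MvPowerSeries.coeff ν (B.a l) ≠ 0 := by
      rw [← hBeq (l, ν) (Finset.mem_singleton_self _)]
      exact hν
    have h1 : rle r B.top (ν + α l) := B.htop_max l ν hBν
    rw [hνm] at h1
    exact rle_trans hr hAB.1 h1
  refine ⟨⟨abar, mtop, hPhibar, hmtop_mem, hmtop_max⟩, ?_⟩
  intro A hA
  refine ⟨hFtop A hA, ?_⟩
  intro l ν hneq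
  simp only at hneq
  obtain ⟨B, hBC, hAB, hBeq⟩ := hP2 {(l, ν)} A hA
  have hBdiff : MvPowerSeries.coeff ν (B.a l) ≠ MvPowerSeries.coeff ν (A.a l) := by
    rw [← hBeq (l, ν) (Finset.mem_singleton_self _)]
    exact hneq
  obtain ⟨γ, hT, h1, h2⟩ := hAB.2 l ν hBdiff
  exact ⟨γ, hT, h1, r_of_r_of_rle hr h2 (hFtop B hBC)⟩

end LocalOrder
end ChainSection

section MainClaim

variable {n s : ℕ} {K : Type*} [Field K]
variable {r : (Fin n →₀ ℕ) → (Fin n →₀ ℕ) → Prop}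
variable {G : Fin s → MvPolynomial (Fin n) K} {α : Fin s → (Fin n →₀ ℕ)}

namespace LocalOrder

/-- Main claim: the lead monomial of any power series combination of the `G l`
is divisible by some `α i`. -/
theorem main_claim (hr : IsLocalOrder r) (hα : ∀ i, IsLeadMon r (G i) (α i))
    (hNF : ∀ i j : Fin s, i ≠ j →
      ∃ (u : MvPolynomial (Fin n) K) (a : Fin s → MvPolynomial (Fin n) K),
        IsLeadMon r u 0 ∧
        u * spoly (G i) (G j) (α i) (α j) = ∑ l, a l * G l ∧
        ∀ l, a l ≠ 0 → ∃ μ ν, IsLeadMon r (spoly (G i) (G j) (α i) (α j)) μ ∧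
          IsLeadMon r (a l * G l) ν ∧ (r μ ν ∨ μ = ν))
    {h : MvPowerSeries (Fin n) K} (hh : h ≠ 0) {β : Fin n →₀ ℕ} (hβ : IsLMps r h β)
    (hrep : ∃ c : Fin s → MvPowerSeries (Fin n) K,
      (∑ l, c l * (G l : MvPowerSeries (Fin n) K)) = h) :
    ∃ i ν, β = ν + α i := by
  classical
  obtain ⟨b, hb⟩ := exists_b hr hα hNF
  -- initial representation
  obtain ⟨c, hcPhi⟩ := hrep
  have hne' : ∃ l ν, MvPowerSeries.coeff ν (c l) ≠ 0 := by
    by_contra hcon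
    push_neg at hcon
    apply hh
    rw [← hcPhi]
    refine Finset.sum_eq_zero fun l _ => ?_
    have hz : c l = 0 := MvPowerSeries.ext fun ν => by rw [hcon l ν]; simp
    rw [hz, zero_mul]
  have hex : ∃ m, (∃ l ν, MvPowerSeries.coeff ν (c l) ≠ 0 ∧ ν + α l = m) ∧
      (∀ l ν, MvPowerSeries.coeff ν (c l) ≠ 0 → rle r m (ν + α l)) := by
    obtain ⟨m, hm, hmax⟩ := exists_rmax hr
      {δ | ∃ l ν, MvPowerSeries.coeff ν (c l) ≠ 0 ∧ ν + α l = δ}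
      (by obtain ⟨l, ν, hlν⟩ := hne'; exact ⟨ν + α l, l, ν, hlν, rfl⟩)
    refine ⟨m, hm, fun l ν hν => ?_⟩
    rcases eq_or_ne m (ν + α l) with hh' | hh'
    · exact Or.inl hh'
    · exact Or.inr (hmax _ ⟨l, ν, hν, rfl⟩ (Ne.symm hh'))
  obtain ⟨top₀, htop₀mem, htop₀max⟩ := hex
  have : Nonempty (SRep r G α h) := ⟨⟨c, top₀, hcPhi, htop₀mem, htop₀max⟩⟩
  -- Zorn's lemma
  obtain ⟨M, hM⟩ := exists_maximal_of_nonempty_chains_bounded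
    (r := SRep.le (r := r) (G := G) (α := α) (h := h) b)
    (fun C hC hne => by
      obtain ⟨UB, hUB⟩ := chain_bound hr hh hC hne
      exact ⟨UB, hUB⟩)
    (fun hab hbc => SRep.le_trans hr hab hbc)
  -- the top of the maximal representation is the lead monomial of h
  have hβle : rle r M.top β := by
    have hν := hβ.1
    rw [← M.hPhi] at hν
    exact rle_of_levels_bound hr hα M.htop_max hν
  rcases hβle with heq | hlt
  · obtain ⟨l, ν, hν, hνtop⟩ := M.htop_mem
    exact ⟨l, ν, by rw [← heq, ← hνtop]⟩
  · obtain ⟨B, hMB, hMBstrict⟩ := SRep.step hr hα hb hh hβ M hlt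
    have hBM := hM B hMB
    exact absurd (r_of_rle_of_r hr hBM.1 hMBstrict) (rirrefl hr)

end LocalOrder
end MainClaim

/-- Buchberger's criterion for standard bases: if `G = {g₁,...,g_s}` generates the ideal
`I ⊆ Loc_>(K[X])` and every S-polynomial `spoly(gᵢ,gⱼ)` has a weak normal form `0` with
respect to `G`, then `G` is a standard basis: `lt(I) = ⟨lt(g₁),...,lt(g_s)⟩`. -/
theorem buchberger_criterion_standard_basis {n s : ℕ} {K : Type*} [Field K]
    (r : (Fin n →₀ ℕ) → (Fin n →₀ ℕ) → Prop) (hr : IsLocalOrder r)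
    (G : Fin s → MvPolynomial (Fin n) K) (hG : ∀ i, G i ≠ 0)
    (α : Fin s → (Fin n →₀ ℕ)) (hα : ∀ i, IsLeadMon r (G i) (α i))
    (I : Ideal (Localization (unitSet n K)))
    (hgen : I = Ideal.span (Set.range fun i =>
      algebraMap (MvPolynomial (Fin n) K) (Localization (unitSet n K)) (G i)))
    (hNF : ∀ i j : Fin s, i ≠ j →
      ∃ (u : MvPolynomial (Fin n) K) (a : Fin s → MvPolynomial (Fin n) K),
        IsLeadMon r u 0 ∧
        u * spoly (G i) (G j) (α i) (α j) = ∑ l, a l * G l ∧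
        ∀ l, a l ≠ 0 → ∃ μ ν, IsLeadMon r (spoly (G i) (G j) (α i) (α j)) μ ∧
          IsLeadMon r (a l * G l) ν ∧ (r μ ν ∨ μ = ν)) :
    Ideal.span {m : MvPolynomial (Fin n) K | ∃ f : MvPolynomial (Fin n) K,
        algebraMap (MvPolynomial (Fin n) K) (Localization (unitSet n K)) f ∈ I ∧
        ∃ β, IsLeadMon r f β ∧ m = monomial β (f.coeff β)}
      = Ideal.span {m : MvPolynomial (Fin n) K |
          ∃ i : Fin s, m = monomial (α i) ((G i).coeff (α i))} := by
  classical
  apply le_antisymm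
  · rw [Ideal.span_le]
    rintro m ⟨f, hfI, β, hβlead, rfl⟩
    -- clear denominators: some u ∈ unitSet with u * f in the polynomial span of the G i
    have hloc : ∃ u : MvPolynomial (Fin n) K, u ∈ unitSet n K ∧
        u * f ∈ Ideal.span (Set.range G) := by
      rw [hgen] at hfI
      have hmap : Ideal.span (Set.range fun i =>
          algebraMap (MvPolynomial (Fin n) K) (Localization (unitSet n K)) (G i))
          = Ideal.map (algebraMap (MvPolynomial (Fin n) K) (Localization (unitSet n K)))
            (Ideal.span (Set.range G)) := by
        rw [Ideal.map_span, ← Set.range_comp]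
        rfl
      rw [hmap] at hfI
      obtain ⟨⟨p, u⟩, hx⟩ := (IsLocalization.mem_map_algebraMap_iff (unitSet n K)
        (Localization (unitSet n K))).mp hfI
      rw [← map_mul] at hx
      obtain ⟨cc, hcc⟩ := (IsLocalization.eq_iff_exists (unitSet n K)
        (Localization (unitSet n K))).mp hx
      refine ⟨(cc : MvPolynomial (Fin n) K) * u, Submonoid.mul_mem _ cc.2 u.2, ?_⟩
      have : (cc : MvPolynomial (Fin n) K) * u * f = (cc : MvPolynomial (Fin n) K) * p := by
        have h1 := hcc
        ring_nf at h1 ⊢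
        rw [mul_comm] at h1 ⊢
        linear_combination h1
      rw [this]
      exact Ideal.mul_mem_left _ _ p.2
    obtain ⟨u, huS, hufmem⟩ := hloc
    have hu1 : MvPolynomial.coeff 0 u = 1 := by
      have := huS
      rw [unitSet, Submonoid.mem_comap, Submonoid.mem_bot] at this
      simpa [MvPolynomial.constantCoeff_eq] using this
    have hfne : f ≠ 0 := by
      intro hf
      rw [hf] at hβlead
      simp [IsLeadMon] at hβlead
    have hune : u ≠ 0 := by
      intro hu
      rw [hu] at hu1
      simp at hu1
    set h : MvPowerSeries (Fin n) K := ((u * f : MvPolynomial (Fin n) K) : MvPowerSeries (Fin n) K)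
      with hhdef
    have hh : h ≠ 0 := by
      rw [hhdef, Ne, MvPolynomial.coe_eq_zero_iff]
      exact mul_ne_zero hune hfne
    have hβh : IsLMps r h β := by
      have h1 : IsLMps r ((u : MvPolynomial (Fin n) K) : MvPowerSeries (Fin n) K) 0 := by
        constructor
        · rw [MvPolynomial.coeff_coe, hu1]; exact one_ne_zero
        · intro ε _ hne
          exact LocalOrder.r_zero hr ε hne
      have h2 := LocalOrder.isLMps_mul hr h1 (LocalOrder.isLMps_coe (r := r) hβlead)
      rw [zero_add] at h2
      rw [hhdef, MvPolynomial.coe_mul]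
      exact h2
    have hrep : ∃ c : Fin s → MvPowerSeries (Fin n) K,
        (∑ l, c l * (G l : MvPowerSeries (Fin n) K)) = h := by
      obtain ⟨c, hc⟩ := Ideal.mem_span_range_iff_exists_fun.mp hufmem
      refine ⟨fun l => (c l : MvPowerSeries (Fin n) K), ?_⟩
      have hcoe : ∀ p : MvPolynomial (Fin n) K,
          (p : MvPowerSeries (Fin n) K) = MvPolynomial.coeToMvPowerSeries.ringHom p :=
        fun _ => rfl
      rw [hhdef, ← hc, hcoe, map_sum]
      refine Finset.sum_congr rfl fun l _ => ?_
      rw [← hcoe, MvPolynomial.coe_mul]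
    obtain ⟨i, ν, hβν⟩ := LocalOrder.main_claim hr hα hNF hh hβh hrep
    have hlci : (G i).coeff (α i) ≠ 0 := MvPolynomial.mem_support_iff.mp (hα i).1
    have hfactor : (monomial β (f.coeff β) : MvPolynomial (Fin n) K)
        = monomial ν (f.coeff β * ((G i).coeff (α i))⁻¹) * monomial (α i) ((G i).coeff (α i)) := by
      rw [MvPolynomial.monomial_mul, mul_assoc, inv_mul_cancel₀ hlci, mul_one, ← hβν]
    rw [hfactor]
    exact Ideal.mul_mem_left _ _ (Ideal.subset_span ⟨i, rfl⟩)
  · rw [Ideal.span_le]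
    rintro m ⟨i, rfl⟩
    apply Ideal.subset_span
    refine ⟨G i, ?_, α i, hα i, rfl⟩
    rw [hgen]
    exact Ideal.subset_span ⟨i, rfl⟩
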